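/- Every non-Archimedean ordered field F fails the Limit of Derivatives Property: there exists f : F → F continuous at 0, differentiable on F \ {0} with lim_{t→0} f'(t) = 0, such that either f is not differentiable at 0 or f'(0) ≠ 0. -/

import Mathlib

open Filter Topology

section Aux
variable {F : Type*} [Field F] [LinearOrder F] [IsStrictOrderedRing F]

/-- Archimedean equivalence. -/
def ArchEq (a b : F) : Prop := ∃ n : ℕ, |a| ≤ n * |b| ∧ |b| ≤ n * |a|

lemma archEq_refl (a : F) : ArchEq a a := ⟨1, by simp⟩

lemma archEq_symm {a b : F} (h : ArchEq a b) : ArchEq b a :=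
  let ⟨n, h1, h2⟩ := h; ⟨n, h2, h1⟩

lemma archEq_trans {a b c : F} (h : ArchEq a b) (h' : ArchEq b c) : ArchEq a c := by
  obtain ⟨n, h1, h2⟩ := h
  obtain ⟨m, h3, h4⟩ := h'
  have hn : (0:F) ≤ n := Nat.cast_nonneg n
  have hm : (0:F) ≤ m := Nat.cast_nonneg m
  refine ⟨n * m, ?_, ?_⟩ <;> push_cast <;> nlinarith [abs_nonneg a, abs_nonneg b, abs_nonneg c]

def archSetoid (F : Type*) [Field F] [LinearOrder F] [IsStrictOrderedRing F] : Setoid F :=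
  ⟨ArchEq, archEq_refl, archEq_symm, archEq_trans⟩

noncomputable def archRep (t : F) : F := Quotient.out (Quotient.mk (archSetoid F) t)

lemma archRep_spec (t : F) : ArchEq (archRep t) t := Quotient.mk_out (s := archSetoid F) t

lemma archRep_congr {a b : F} (h : ArchEq a b) : archRep a = archRep b := by
  unfold archRep
  congr 1
  exact Quotient.sound h

lemma archRep_zero : archRep (0:F) = 0 := by
  obtain ⟨n, h1, _⟩ := archRep_spec (0:F)
  simpa using h1

end Aux

/-- The derivative of `f : F → F` at `a` in the order topology. -/
def HasDerivO {F : Type*} [Field F] [LinearOrder F] [IsStrictOrderedRing F] [TopologicalSpace F]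
    (f : F → F) (L a : F) : Prop :=
  Tendsto (fun x => (f x - f a) / (x - a)) (𝓝[≠] a) (𝓝 L)

/-- every non-Archimedean ordered field fails the Limit of Derivatives
Property: there is an `f` continuous at `0`, differentiable off `0` with derivative
tending to `0`, which is either non-differentiable at `0` or has nonzero derivative
there. -/
theorem stmt_12 {F : Type*} [Field F] [LinearOrder F] [IsStrictOrderedRing F] [TopologicalSpace F] [OrderTopology F]
    (hna : ∃ x : F, ∀ n : ℕ, (n : F) < x) :
    ∃ f f' : F → F, ContinuousAt f 0 ∧
      (∀ t : F, t ≠ 0 → HasDerivO f (f' t) t) ∧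
      Tendsto f' (𝓝[≠] (0 : F)) (𝓝 0) ∧
      ((¬∃ L : F, HasDerivO f L 0) ∨ (∃ L : F, HasDerivO f L 0 ∧ L ≠ 0)) := by
  obtain ⟨ω, hω⟩ := hna
  have hω0 : (0:F) < ω := lt_trans (by norm_num : (0:F) < 1) (by exact_mod_cast hω 1)
  refine ⟨archRep, fun _ => 0, ?_, ?_, ?_, Or.inl ?_⟩
  · -- continuity at 0
    rw [ContinuousAt, archRep_zero, LinearOrderedAddCommGroup.tendsto_nhds]
    intro ε hε
    have hδ : (0:F) < ε / ω := div_pos hε hω0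
    filter_upwards [eventually_abs_sub_lt 0 hδ] with x hx
    obtain ⟨n, h1, _⟩ := archRep_spec x
    have hn : (n:F) < ω := hω n
    have hn0 : (0:F) ≤ n := Nat.cast_nonneg n
    rw [sub_zero] at hx ⊢
    calc |archRep x| ≤ n * |x| := h1
      _ ≤ n * (ε / ω) := mul_le_mul_of_nonneg_left hx.le hn0
      _ < ε := by rw [mul_div_assoc', div_lt_iff₀ hω0]; nlinarith
  · -- derivative off 0
    intro t ht
    have hT : (0:F) < |t| / 2 := half_pos (abs_pos.2 ht)
    rw [HasDerivO]
    have hev : ∀ᶠ x in 𝓝[≠] t, (archRep x - archRep t) / (x - t) = 0 := by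
      filter_upwards [eventually_nhdsWithin_of_eventually_nhds
        (eventually_abs_sub_lt t hT)] with x hx
      have h1 : |x| ≤ 3 * |t| := by
        have := abs_sub_abs_le_abs_sub x t
        have h0 : (0:F) ≤ |t| := abs_nonneg t
        linarith
      have h2 : |t| ≤ 3 * |x| := by
        have := abs_sub_abs_le_abs_sub t x
        rw [abs_sub_comm] at this
        have h0 : (0:F) ≤ |x| := abs_nonneg x
        linarith
      have : archRep x = archRep t := archRep_congr ⟨3, by push_cast; exact ⟨h1, h2⟩⟩
      simp [this]
    exact Tendsto.congr' (hev.mono fun x h => h.symm) tendsto_const_nhds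
  · exact tendsto_const_nhds
  · -- not differentiable at 0
    rintro ⟨L, hL⟩
    rw [HasDerivO] at hL
    simp only [archRep_zero, sub_zero] at hL
    have hE := (LinearOrderedAddCommGroup.tendsto_nhds.mp hL) (1/4) (by norm_num)
    obtain ⟨δ, hδ, hsub⟩ :=
      (nhdsWithin_hasBasis (nhds_basis_abs_sub_lt (0:F)) _).mem_iff.mp hE
    set y : F := δ / ω with hy_def
    have hy : (0:F) < y := div_pos hδ hω0
    obtain ⟨n, hc1, hc2⟩ := archRep_spec y
    set c : F := archRep y with hc_def
    have hc0 : c ≠ 0 := by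
      intro h
      rw [h, abs_zero, mul_zero] at hc2
      exact absurd hc2 (not_le.mpr (abs_pos.mpr hy.ne'))
    have hyabs : |y| = y := abs_of_pos hy
    have hnω : (n:F) < ω := hω n
    have h2nω : ((2*n : ℕ):F) < ω := hω (2*n)
    have hn0 : (0:F) ≤ n := Nat.cast_nonneg n
    have hcδ : |c| < δ := by
      calc |c| ≤ n * |y| := hc1
        _ = n * (δ / ω) := by rw [hyabs]
        _ < δ := by rw [mul_div_assoc', div_lt_iff₀ hω0]; nlinarith
    have h2cδ : |2 * c| < δ := by
      rw [abs_mul, abs_two]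
      calc 2 * |c| ≤ 2 * (n * |y|) := by linarith
        _ = (2*n : ℕ) * (δ / ω) := by push_cast; rw [hyabs]; ring
        _ < δ := by rw [mul_div_assoc', div_lt_iff₀ hω0]; push_cast at h2nω ⊢; nlinarith
    have hrc : archRep c = c := archRep_congr (archRep_spec y)
    have hr2c : archRep (2 * c) = c := by
      have : ArchEq (2 * c) c := ⟨2, by
        rw [abs_mul, abs_two]
        constructor
        · push_cast; linarith [abs_nonneg c]
        · push_cast; nlinarith [abs_nonneg c]⟩
      rw [archRep_congr this, hrc]
    have hm1 : c ∈ {x : F | |x - 0| < δ} ∩ {(0:F)}ᶜ :=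
      ⟨by simpa using hcδ, by simpa using hc0⟩
    have hm2 : 2 * c ∈ {x : F | |x - 0| < δ} ∩ {(0:F)}ᶜ :=
      ⟨by simpa using h2cδ, by simp [hc0]⟩
    have e1 := hsub hm1
    have e2 := hsub hm2
    simp only [Set.mem_setOf_eq, hrc, hr2c] at e1 e2
    rw [div_self hc0] at e1
    have hhalf : c / (2 * c) = 1 / 2 := by
      rw [mul_comm, ← div_div, div_self hc0]
    rw [hhalf] at e2
    rw [abs_lt] at e1 e2
    linarith [e1.1, e1.2, e2.1, e2.2]
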